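/- Let $p \ge 5$ be a prime and let $a, b \in \mathrm{GF}(p)$ with $a \ne 0$. Suppose the cubic polynomial $f(X) = X^3 + aX + b$ is irreducible over $\mathrm{GF}(p)$, and write $X^p \equiv c_2 X^2 + c_1 X + c_0 \pmod{f(X)}$ for the (unique) coefficients $c_0, c_1, c_2 \in \mathrm{GF}(p)$ of the remainder of $X^p$ upon division by $f$. Then $c_2 \ne 0$, and the element $t = 3a \cdot c_2^{-1}$ satisfies $t^2 = -(4a^3 + 27b^2)$ in $\mathrm{GF}(p)$. -/

import Mathlib

open Polynomial

/-- **Theorem 2.** If `x^3 + a x + b` is irreducible over `GF(p)` (with `p ≥ 5` prime,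
`a ≠ 0`), and `X^p ≡ c₂ X² + c₁ X + c₀ (mod f)`, then `c₂ ≠ 0` and
`t = 3a · c₂⁻¹` satisfies `t² = -(4a³ + 27b²)`. -/
theorem gfp3_sqrt_depressed_cubic (p : ℕ) (hp : p.Prime) (hp5 : 5 ≤ p)
    (a b : ZMod p) (ha : a ≠ 0)
    (f : (ZMod p)[X]) (hf : f = X ^ 3 + C a * X + C b)
    (hirr : Irreducible f)
    (c₀ c₁ c₂ : ZMod p)
    (hrem : (X : (ZMod p)[X]) ^ p %ₘ f = C c₂ * X ^ 2 + C c₁ * X + C c₀) :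
    c₂ ≠ 0 ∧ (3 * a * c₂⁻¹) ^ 2 = -(4 * a ^ 3 + 27 * b ^ 2) := by
  haveI : Fact p.Prime := ⟨hp⟩
  haveI := Fact.mk hirr
  have hmonic : f.Monic := by
    rw [hf, add_assoc]; exact monic_X_pow_add (lt_of_le_of_lt degree_linear_le (by decide))
  have hdeg : f.degree = 3 := by rw [hf]; compute_degree!
  set K := AdjoinRoot f with hK
  set φ := AdjoinRoot.of f with hφ
  set α := AdjoinRoot.root f with hα
  haveI : CharP K p := charP_of_injective_algebraMap (algebraMap (ZMod p) K).injective p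
  have hφp : ∀ z : ZMod p, (φ z) ^ p = φ z := fun z => by rw [← map_pow, ZMod.pow_card]
  have hcube : α ^ 3 + φ a * α + φ b = 0 := by
    have h : aeval α (X ^ 3 + C a * X + C b) = 0 := by
      rw [← hf, AdjoinRoot.aeval_eq, AdjoinRoot.mk_self]
    simpa using h
  -- independence
  have hg : ∀ d₂ d₁ d₀ : ZMod p, φ d₂ * α ^ 2 + φ d₁ * α + φ d₀ = 0 →
      d₂ = 0 ∧ d₁ = 0 ∧ d₀ = 0 := by
    intro d₂ d₁ d₀ h
    have h1 : aeval α (C d₂ * X ^ 2 + C d₁ * X + C d₀) = 0 := by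
      simpa using h
    rw [AdjoinRoot.aeval_eq, AdjoinRoot.mk_eq_zero] at h1
    have h2 : (C d₂ * X ^ 2 + C d₁ * X + C d₀ : (ZMod p)[X]) = 0 :=
      eq_zero_of_dvd_of_degree_lt h1 (lt_of_le_of_lt degree_quadratic_le (by rw [hdeg]; decide))
    refine ⟨?_, ?_, ?_⟩
    · simpa using congrArg (fun q => Polynomial.coeff q 2) h2
    · simpa using congrArg (fun q => Polynomial.coeff q 1) h2
    · simpa using congrArg (fun q => Polynomial.coeff q 0) h2
  -- X^p mod f
  have hβ : α ^ p = φ c₂ * α ^ 2 + φ c₁ * α + φ c₀ := by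
    have h := Polynomial.modByMonic_add_div ((X : (ZMod p)[X]) ^ p) f
    have h2 : aeval α ((X : (ZMod p)[X]) ^ p %ₘ f + f * (X ^ p /ₘ f)) = α ^ p := by
      rw [h]; simp
    have haf : aeval α f = 0 := by rw [AdjoinRoot.aeval_eq, AdjoinRoot.mk_self]
    rw [map_add, map_mul, haf, zero_mul, add_zero, hrem] at h2
    rw [← h2]; simp; rfl
  -- fixed points of Frobenius
  have hfix : ∀ t : AdjoinRoot f, t ^ p = t → ∃ z : ZMod p, φ z = t := by
    intro t ht
    by_contra hc
    push_neg at hc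
    have hnmem : t ∉ Finset.univ.image φ := by
      simp only [Finset.mem_image, Finset.mem_univ, true_and]
      exact fun ⟨z, hz⟩ => hc z hz
    have hdegX : (X ^ p - X : K[X]).natDegree = p :=
      FiniteField.X_pow_card_sub_X_natDegree_eq K (by omega)
    have hne : (X ^ p - X : K[X]) ≠ 0 :=
      FiniteField.X_pow_card_sub_X_ne_zero K (by omega)
    have hsub : (insert t (Finset.univ.image φ)).val ⊆ (X ^ p - X : K[X]).roots := by
      intro y hy
      rw [Finset.mem_val, Finset.mem_insert] at hy
      rw [Polynomial.mem_roots hne]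
      rcases hy with rfl | hy
      · simp [Polynomial.IsRoot, ht]
      · obtain ⟨z, -, rfl⟩ := Finset.mem_image.1 hy
        simp [Polynomial.IsRoot, hφp z]
    have hcard := Polynomial.card_le_degree_of_subset_roots hsub
    rw [hdegX, Finset.card_insert_of_notMem hnmem,
      Finset.card_image_of_injective _ φ.injective,
      Finset.card_univ, ZMod.card] at hcard
    omega
  -- no root of the cubic is in the prime field
  have hnr : ∀ t : AdjoinRoot f, t ^ 3 + φ a * t + φ b = 0 → ∀ z : ZMod p, φ z ≠ t := by
    intro t htt z hz
    have hz3 : z ^ 3 + a * z + b = 0 := by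
      apply φ.injective
      rw [map_add, map_add, map_pow, map_mul, map_zero, hz]
      exact htt
    have hroot : (X - C z) ∣ f := by
      rw [dvd_iff_isRoot, hf]
      simp [Polynomial.IsRoot, hz3]
    obtain ⟨g, hfg⟩ := hroot
    rcases hirr.isUnit_or_isUnit hfg with hu | hu
    · exact (Polynomial.not_isUnit_X_sub_C z) hu
    · have : f.degree = 1 + g.degree := by rw [hfg, degree_mul, degree_X_sub_C]
      rw [hdeg, Polynomial.isUnit_iff_degree_eq_zero.1 hu] at this
      simp at this
  -- the Frobenius image of α
  set β := φ c₂ * α ^ 2 + φ c₁ * α + φ c₀ with hβdef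
  have hβf : β ^ 3 + φ a * β + φ b = 0 := by
    have h0 : (α ^ 3 + φ a * α + φ b) ^ p = 0 := by rw [hcube]; exact zero_pow hp.ne_zero
    rw [add_pow_char, add_pow_char, mul_pow, hφp, hφp, pow_right_comm, hβ] at h0
    exact h0
  have hβα : β ≠ α := by
    intro h
    obtain ⟨z, hz⟩ := hfix α (by rw [hβ, h])
    exact hnr α hcube z hz
  have hkey : β ^ 2 + α * β + α ^ 2 + φ a = 0 := by
    rcases mul_eq_zero.1 (show (β - α) * (β ^ 2 + α * β + α ^ 2 + φ a) = 0 by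
      linear_combination hβf - hcube) with h | h
    · exact absurd (sub_eq_zero.1 h) hβα
    · exact h
  have hβp : β ^ p = φ c₂ * β ^ 2 + φ c₁ * β + φ c₀ := by
    conv_lhs => rw [hβdef]
    rw [add_pow_char, add_pow_char, mul_pow, mul_pow, hφp, hφp, hφp, pow_right_comm, hβ]
  have hsf : (β ^ p) ^ 3 + φ a * β ^ p + φ b = 0 := by
    have h0 : (β ^ 3 + φ a * β + φ b) ^ p = 0 := by rw [hβf]; exact zero_pow hp.ne_zero
    rw [add_pow_char, add_pow_char, mul_pow, hφp, hφp, pow_right_comm] at h0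
    exact h0
  set s := β ^ p with hsdef
  have htri : (s - α) * ((s - β) * (s + α + β)) = 0 := by
    linear_combination hsf - (s - α) * hkey - hcube
  have hsnα : s ≠ α := by
    intro hcase
    have ht : (α + β) ^ p = α + β := by rw [add_pow_char, hβ, ← hsdef, hcase]; ring
    have hu : (α * β) ^ p = α * β := by rw [mul_pow, hβ, ← hsdef, hcase]; ring
    obtain ⟨z₁, hz₁⟩ := hfix _ ht
    obtain ⟨z₂, hz₂⟩ := hfix _ hu
    have h0 : φ 1 * α ^ 2 + φ (-z₁) * α + φ z₂ = 0 := by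
      rw [map_one, map_neg, hz₁, hz₂]; ring
    exact one_ne_zero (hg 1 (-z₁) z₂ h0).1
  have hsnβ : s ≠ β := by
    intro hcase
    obtain ⟨z, hz⟩ := hfix β (by rw [← hsdef, hcase])
    exact hnr β hβf z hz
  have hII0 : s + α + β = 0 := by
    rcases mul_eq_zero.1 htri with h | h
    · exact absurd (sub_eq_zero.1 h) hsnα
    rcases mul_eq_zero.1 h with h | h
    · exact absurd (sub_eq_zero.1 h) hsnβ
    · exact h
  have hII : φ c₂ * β ^ 2 + φ c₁ * β + φ c₀ + α + β = 0 := by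
    rw [← hβp]; exact hII0
  rw [hβdef] at hkey hII
  -- extract scalar equations
  obtain ⟨hE2, hE1, hE0⟩ := hg (2*c₂*c₀ + c₁^2 + c₁ + 1 - a*c₂^2)
      (2*c₀*c₁ + c₀ - b*c₂^2 - 2*a*c₁*c₂ - a*c₂) (c₀^2 + a - 2*b*c₁*c₂ - b*c₂) (by
    simp only [map_add, map_sub, map_mul, map_pow, map_one, map_ofNat]
    linear_combination hkey - (φ c₂ ^ 2 * α + 2 * φ c₁ * φ c₂ + φ c₂) * hcube)
  obtain ⟨hF2, hF1, hF0⟩ := hg (2*c₀*c₂^2 + c₁^2*c₂ + c₁*c₂ + c₂ - a*c₂^3)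
      (2*c₀*c₁*c₂ + c₁^2 + c₁ + 1 - b*c₂^3 - 2*a*c₁*c₂^2)
      (c₀^2*c₂ + c₀*c₁ + 2*c₀ - 2*b*c₁*c₂^2) (by
    simp only [map_add, map_sub, map_mul, map_pow, map_one, map_ofNat]
    linear_combination hII - (φ c₂ ^ 3 * α + 2 * φ c₁ * φ c₂ ^ 2) * hcube)
  -- scalar endgame
  have h3 : (3 : ZMod p) ≠ 0 := by
    intro h
    have h' : ((3 : ℕ) : ZMod p) = 0 := by exact_mod_cast h
    rw [ZMod.natCast_eq_zero_iff] at h'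
    have := Nat.le_of_dvd (by norm_num) h'
    omega
  have hc2 : c₂ ≠ 0 := by
    intro h
    have e0 : c₀^2 + a = 0 := by linear_combination hE0 + (2*b*c₁ + b) * h
    have hc0 : c₀ ≠ 0 := by intro h0; exact ha (by linear_combination e0 - c₀ * h0)
    have e1 : c₀ * (2*c₁ + 1) = 0 := by linear_combination hE1 + (b*c₂ + 2*a*c₁ + a) * h
    have h21 : 2*c₁ + 1 = 0 := by
      rcases mul_eq_zero.1 e1 with h' | h'
      · exact absurd h' hc0
      · exact h'
    exact h3 (by linear_combination 4*hE2 - (2*c₁+1)*h21 + (4*a*c₂ - 8*c₀)*h)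
  have hD2 : 3*c₀ - 2*a*c₂ = 0 := by
    rcases mul_eq_zero.1 (show c₂ * (3*c₀ - 2*a*c₂) = 0 by
      linear_combination -hF1 + c₂ * hE1 + hE2) with h | h
    · exact absurd h hc2
    · exact h
  have hP : 2*a*c₁ + a + 3*b*c₂ = 0 := by
    rcases mul_eq_zero.1 (show c₂ * (2*a*c₁ + a + 3*b*c₂) = 0 by
      linear_combination 3*hF0 - 3*c₂*hE0 + (-c₁ - 2)*hD2) with h | h
    · exact absurd h hc2
    · exact h
  have hG : 9*a^2 + 4*a^3*c₂^2 + 27*b^2*c₂^2 = 0 := by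
    linear_combination 9*a*hE0 + 9*b*c₂*hP + (-2*a^2*c₂ - 3*a*c₀)*hD2
  have hgoal : (3 * a * c₂⁻¹) ^ 2 = -(4 * a ^ 3 + 27 * b ^ 2) := by
    field_simp
    linear_combination hG
  exact ⟨hc2, hgoal⟩
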